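/- Let a, b ∈ ℝ and let u : ℝ² \ {(0,0)} → ℝ be a C² solution of Δu + a uₓ + b u_y + ((a² + b²)/4) u = 0 on ℝ² \ {(0,0)} with u(x, y) = 0 whenever x² + y² = 1. Then for every (x₀, y₀) ≠ (0, 0), u(x₀, y₀) = −exp((a x₀ + b y₀)(1 − x₀² − y₀²)/(2(x₀² + y₀²))) · u(x₀/(x₀² + y₀²), y₀/(x₀² + y₀²)). -/

import Mathlib

/-- Partial derivative with respect to the first variable. -/
noncomputable def pdx (u : ℝ × ℝ → ℝ) (p : ℝ × ℝ) : ℝ :=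
  deriv (fun x : ℝ => u (x, p.2)) p.1

/-- Partial derivative with respect to the second variable. -/
noncomputable def pdy (u : ℝ × ℝ → ℝ) (p : ℝ × ℝ) : ℝ :=
  deriv (fun y : ℝ => u (p.1, y)) p.2

open Complex Filter

/-- A real-linear functional on ℂ is determined by its values at 1 and I. -/
lemma clm_apply_decomp (T : ℂ →L[ℝ] ℝ) (μ : ℂ) : T μ = μ.re * T 1 + μ.im * T I := by
  conv_lhs => rw [← Complex.re_add_im μ]
  have h1 : (μ.re : ℂ) + (μ.im : ℂ) * I = μ.re • (1 : ℂ) + μ.im • I := by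
    simp [Complex.real_smul]
  rw [h1, map_add, map_smul, map_smul, smul_eq_mul, smul_eq_mul]

lemma clmC_apply_decomp (T : ℂ →L[ℝ] ℂ) (μ : ℂ) : T μ = μ.re • T 1 + μ.im • T I := by
  conv_lhs => rw [← Complex.re_add_im μ]
  have h1 : (μ.re : ℂ) + (μ.im : ℂ) * I = μ.re • (1 : ℂ) + μ.im • I := by
    simp [Complex.real_smul]
  rw [h1, map_add, map_smul, map_smul]

/-- CR condition gives complex differentiability. -/
lemma hasDerivAt_of_CR {f : ℂ → ℂ} {L : ℂ →L[ℝ] ℂ} {z : ℂ}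
    (h : HasFDerivAt f L z) (hCR : L I = I * L 1) : HasDerivAt f (L 1) z := by
  rw [hasDerivAt_iff_hasFDerivAt]
  refine hasFDerivAt_of_restrictScalars ℝ h ?_
  ext μ
  have := clmC_apply_decomp L μ
  simp only [ContinuousLinearMap.coe_restrictScalars', ContinuousLinearMap.smulRight_apply,
    ContinuousLinearMap.one_apply]
  rw [this, hCR]
  simp only [Complex.real_smul, smul_eq_mul]
  conv_lhs => rw [← Complex.re_add_im μ]
  simp only [ContinuousLinearMap.toSpanSingleton_apply, smul_eq_mul]
  ring

/-- The key pointwise algebraic identity for the Wirtinger-type combination. -/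
lemma key_combo (T : ℂ →L[ℝ] ℝ) (μ : ℂ) :
    ((T μ : ℝ) : ℂ) - ((T (-(I * μ)) : ℝ) : ℂ) * I
      = (starRingEnd ℂ) (((T 1 : ℝ) : ℂ) - ((T I : ℝ) : ℂ) * I) * (starRingEnd ℂ) μ := by
  rw [clm_apply_decomp T μ, clm_apply_decomp T (-(I * μ))]
  have h1 : (-(I * μ)).re = μ.im := by simp
  have h2 : (-(I * μ)).im = -μ.re := by simp
  rw [h1, h2]
  simp only [Complex.ext_iff, Complex.sub_re, Complex.sub_im, Complex.mul_re, Complex.mul_im,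
    Complex.ofReal_re, Complex.ofReal_im, Complex.add_re, Complex.add_im, Complex.I_re,
    Complex.I_im, Complex.conj_re, Complex.conj_im, Complex.ofReal_add, Complex.ofReal_mul]
  constructor <;> ring

/-- Conjugation-reflection preserves complex differentiability. -/
lemma hasDerivAt_conj_conj {g : ℂ → ℂ} {d w : ℂ}
    (h : HasDerivAt g d ((starRingEnd ℂ) w)) :
    HasDerivAt (fun z => (starRingEnd ℂ) (g ((starRingEnd ℂ) z))) ((starRingEnd ℂ) d) w := by
  rw [hasDerivAt_iff_isLittleO] at h ⊢
  rw [Asymptotics.isLittleO_iff] at h ⊢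
  intro ε hε
  have hcont : Filter.Tendsto (fun z : ℂ => (starRingEnd ℂ) z) (nhds w) (nhds ((starRingEnd ℂ) w)) := by
    exact (Complex.conjCLE.continuous.tendsto w)
  filter_upwards [hcont.eventually (h hε)] with z hz
  have keyeq : (starRingEnd ℂ) (g ((starRingEnd ℂ) z)) - (starRingEnd ℂ) (g ((starRingEnd ℂ) w))
      - (z - w) • (starRingEnd ℂ) d
      = (starRingEnd ℂ) (g ((starRingEnd ℂ) z) - g ((starRingEnd ℂ) w)
          - ((starRingEnd ℂ) z - (starRingEnd ℂ) w) • d) := by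
    simp only [map_sub, smul_eq_mul, map_mul, Complex.conj_conj]
  rw [keyeq, RCLike.norm_conj]
  refine hz.trans_eq ?_
  congr 1
  rw [← map_sub, RCLike.norm_conj]

noncomputable def Uf (u : ℝ × ℝ → ℝ) : ℂ → ℝ := fun z => u (z.re, z.im)

lemma isOpen_punct : IsOpen {z : ℂ | z ≠ 0} := isOpen_compl_singleton

lemma mem_punct_iff {z : ℂ} : z ≠ 0 ↔ (z.re, z.im) ≠ ((0 : ℝ), (0 : ℝ)) := by
  constructor
  · intro hz h
    exact hz (Complex.ext (by simpa using congrArg Prod.fst h) (by simpa using congrArg Prod.snd h))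
  · intro h hz
    exact h (by rw [hz]; simp)

lemma Uf_contDiffOn {u : ℝ × ℝ → ℝ} (hu : ContDiffOn ℝ 2 u {p : ℝ × ℝ | p ≠ (0, 0)}) :
    ContDiffOn ℝ 2 (Uf u) {z : ℂ | z ≠ 0} := by
  have hco : ContDiff ℝ 2 (fun z : ℂ => (z.re, z.im)) :=
    ContDiff.prodMk Complex.reCLM.contDiff Complex.imCLM.contDiff
  exact hu.comp hco.contDiffOn (fun z hz => mem_punct_iff.1 hz)

lemma Uf_diffAt {u : ℝ × ℝ → ℝ} (hu : ContDiffOn ℝ 2 u {p : ℝ × ℝ | p ≠ (0, 0)}) {z : ℂ}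
    (hz : z ≠ 0) : DifferentiableAt ℝ (Uf u) z := by
  have := ((Uf_contDiffOn hu).contDiffAt (isOpen_punct.mem_nhds hz))
  exact this.differentiableAt (by norm_num)

lemma Uf_fderiv_diffAt {u : ℝ × ℝ → ℝ} (hu : ContDiffOn ℝ 2 u {p : ℝ × ℝ | p ≠ (0, 0)}) {z : ℂ}
    (hz : z ≠ 0) : DifferentiableAt ℝ (fderiv ℝ (Uf u)) z := by
  have h1 := ((Uf_contDiffOn hu).contDiffAt (isOpen_punct.mem_nhds hz))
  have h2 : ContDiffAt ℝ 1 (fderiv ℝ (Uf u)) z := h1.fderiv_right (by norm_num)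
  exact h2.differentiableAt (by norm_num)

lemma line_x (c : ℝ) (x : ℝ) : HasDerivAt (fun t : ℝ => (t : ℂ) + (c : ℂ) * I) 1 x := by
  simpa using (Complex.ofRealCLM.hasDerivAt (x := x)).add_const ((c : ℂ) * I)

lemma line_y (c : ℝ) (y : ℝ) : HasDerivAt (fun t : ℝ => (c : ℂ) + (t : ℂ) * I) I y := by
  have h : HasDerivAt (fun t : ℝ => (t : ℂ)) 1 y := by
    simpa using (hasDerivAt_id y).ofReal_comp
  simpa using (h.mul_const I).const_add (c : ℂ)

lemma pdx_dict {u : ℝ × ℝ → ℝ} (hu : ContDiffOn ℝ 2 u {p : ℝ × ℝ | p ≠ (0, 0)}) {z : ℂ}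
    (hz : z ≠ 0) : pdx u (z.re, z.im) = fderiv ℝ (Uf u) z 1 := by
  have hUd' : HasFDerivAt (Uf u) (fderiv ℝ (Uf u) z) ((z.re : ℂ) + (z.im : ℂ) * I) := by
    rw [Complex.re_add_im]; exact (Uf_diffAt hu hz).hasFDerivAt
  have hc := hUd'.comp_hasDerivAt z.re (line_x z.im z.re)
  simp only [Function.comp_def] at hc
  have heq : (fun x : ℝ => Uf u ((x : ℂ) + (z.im : ℂ) * I)) = fun x : ℝ => u (x, z.im) := by
    funext x; simp [Uf]
  rw [heq] at hc
  show deriv (fun x : ℝ => u (x, z.im)) z.re = _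
  simpa using hc.deriv

lemma pdy_dict {u : ℝ × ℝ → ℝ} (hu : ContDiffOn ℝ 2 u {p : ℝ × ℝ | p ≠ (0, 0)}) {z : ℂ}
    (hz : z ≠ 0) : pdy u (z.re, z.im) = fderiv ℝ (Uf u) z I := by
  have hUd' : HasFDerivAt (Uf u) (fderiv ℝ (Uf u) z) ((z.re : ℂ) + (z.im : ℂ) * I) := by
    rw [Complex.re_add_im]; exact (Uf_diffAt hu hz).hasFDerivAt
  have hc := hUd'.comp_hasDerivAt z.im (line_y z.re z.im)
  simp only [Function.comp_def] at hc
  have heq : (fun y : ℝ => Uf u ((z.re : ℂ) + (y : ℂ) * I)) = fun y : ℝ => u (z.re, y) := by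
    funext y; simp [Uf]
  rw [heq] at hc
  show deriv (fun y : ℝ => u (z.re, y)) z.im = _
  simpa using hc.deriv

lemma pdxx_dict {u : ℝ × ℝ → ℝ} (hu : ContDiffOn ℝ 2 u {p : ℝ × ℝ | p ≠ (0, 0)}) {z : ℂ}
    (hz : z ≠ 0) : pdx (pdx u) (z.re, z.im) = fderiv ℝ (fderiv ℝ (Uf u)) z 1 1 := by
  have hcont : Continuous (fun x : ℝ => (x : ℂ) + (z.im : ℂ) * I) := by continuity
  have hmem : z.re ∈ (fun x : ℝ => (x : ℂ) + (z.im : ℂ) * I) ⁻¹' {w : ℂ | w ≠ 0} := by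
    simp only [Set.mem_preimage, Set.mem_setOf_eq, Complex.re_add_im]; exact hz
  have hev : ∀ᶠ (x : ℝ) in nhds z.re, ((x : ℂ) + (z.im : ℂ) * I) ≠ 0 :=
    eventually_of_mem ((isOpen_punct.preimage hcont).mem_nhds hmem) (fun x hx => hx)
  have hev2 : (fun x : ℝ => pdx u (x, z.im))
      =ᶠ[nhds z.re] fun x : ℝ => fderiv ℝ (Uf u) ((x : ℂ) + (z.im : ℂ) * I) 1 := by
    filter_upwards [hev] with x hx
    have h := pdx_dict hu hx
    simpa using h
  show deriv (fun x : ℝ => pdx u (x, z.im)) z.re = _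
  rw [hev2.deriv_eq]
  have happly : HasFDerivAt (fun w : ℂ => fderiv ℝ (Uf u) w 1)
      ((ContinuousLinearMap.apply ℝ ℝ (1 : ℂ)).comp (fderiv ℝ (fderiv ℝ (Uf u)) z))
      ((z.re : ℂ) + (z.im : ℂ) * I) := by
    rw [Complex.re_add_im]
    exact (ContinuousLinearMap.apply ℝ ℝ (1 : ℂ)).hasFDerivAt.comp z
      (Uf_fderiv_diffAt hu hz).hasFDerivAt
  have hc := happly.comp_hasDerivAt z.re (line_x z.im z.re)
  simpa [Function.comp_def] using hc.deriv

lemma pdyy_dict {u : ℝ × ℝ → ℝ} (hu : ContDiffOn ℝ 2 u {p : ℝ × ℝ | p ≠ (0, 0)}) {z : ℂ}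
    (hz : z ≠ 0) : pdy (pdy u) (z.re, z.im) = fderiv ℝ (fderiv ℝ (Uf u)) z I I := by
  have hcont : Continuous (fun y : ℝ => (z.re : ℂ) + (y : ℂ) * I) := by continuity
  have hmem : z.im ∈ (fun y : ℝ => (z.re : ℂ) + (y : ℂ) * I) ⁻¹' {w : ℂ | w ≠ 0} := by
    simp only [Set.mem_preimage, Set.mem_setOf_eq, Complex.re_add_im]; exact hz
  have hev : ∀ᶠ (y : ℝ) in nhds z.im, ((z.re : ℂ) + (y : ℂ) * I) ≠ 0 :=
    eventually_of_mem ((isOpen_punct.preimage hcont).mem_nhds hmem) (fun y hy => hy)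
  have hev2 : (fun y : ℝ => pdy u (z.re, y))
      =ᶠ[nhds z.im] fun y : ℝ => fderiv ℝ (Uf u) ((z.re : ℂ) + (y : ℂ) * I) I := by
    filter_upwards [hev] with y hy
    have h := pdy_dict hu hy
    simpa using h
  show deriv (fun y : ℝ => pdy u (z.re, y)) z.im = _
  rw [hev2.deriv_eq]
  have happly : HasFDerivAt (fun w : ℂ => fderiv ℝ (Uf u) w I)
      ((ContinuousLinearMap.apply ℝ ℝ I).comp (fderiv ℝ (fderiv ℝ (Uf u)) z))
      ((z.re : ℂ) + (z.im : ℂ) * I) := by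
    rw [Complex.re_add_im]
    exact (ContinuousLinearMap.apply ℝ ℝ I).hasFDerivAt.comp z
      (Uf_fderiv_diffAt hu hz).hasFDerivAt
  have hc := happly.comp_hasDerivAt z.im (line_y z.re z.im)
  simpa [Function.comp_def] using hc.deriv

noncomputable def lmap (a b : ℝ) : ℂ →L[ℝ] ℝ := (a/2) • Complex.reCLM + (b/2) • Complex.imCLM

lemma lmap_apply (a b : ℝ) (z : ℂ) : lmap a b z = a/2 * z.re + b/2 * z.im := by
  simp [lmap]

lemma lmap_one (a b : ℝ) : lmap a b 1 = a/2 := by simp [lmap_apply]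

lemma lmap_I (a b : ℝ) : lmap a b I = b/2 := by simp [lmap_apply]

noncomputable def Wf (a b : ℝ) (u : ℝ × ℝ → ℝ) : ℂ → ℝ :=
  fun z => Real.exp (lmap a b z) * Uf u z

noncomputable def DWf (a b : ℝ) (u : ℝ × ℝ → ℝ) (z : ℂ) : ℂ →L[ℝ] ℝ :=
  Real.exp (lmap a b z) • fderiv ℝ (Uf u) z +
    Uf u z • (Real.exp (lmap a b z) • lmap a b)

lemma exp_lmap_hasFDerivAt (a b : ℝ) (z : ℂ) :
    HasFDerivAt (fun w => Real.exp (lmap a b w)) (Real.exp (lmap a b z) • lmap a b) z :=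
  (Real.hasDerivAt_exp (lmap a b z)).comp_hasFDerivAt z (lmap a b).hasFDerivAt

lemma Wf_hasFDerivAt {a b : ℝ} {u : ℝ × ℝ → ℝ}
    (hu : ContDiffOn ℝ 2 u {p : ℝ × ℝ | p ≠ (0, 0)}) {z : ℂ} (hz : z ≠ 0) :
    HasFDerivAt (Wf a b u) (DWf a b u z) z :=
  (exp_lmap_hasFDerivAt a b z).mul (Uf_diffAt hu hz).hasFDerivAt

lemma Wf_contDiffOn {a b : ℝ} {u : ℝ × ℝ → ℝ}
    (hu : ContDiffOn ℝ 2 u {p : ℝ × ℝ | p ≠ (0, 0)}) :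
    ContDiffOn ℝ 2 (Wf a b u) {z : ℂ | z ≠ 0} := by
  have h1 : ContDiff ℝ 2 (fun z : ℂ => Real.exp (lmap a b z)) :=
    Real.contDiff_exp.comp (lmap a b).contDiff
  exact h1.contDiffOn.mul (Uf_contDiffOn hu)

set_option synthInstance.maxHeartbeats 1000000 in
lemma Wf_lap {a b : ℝ} {u : ℝ × ℝ → ℝ}
    (hu : ContDiffOn ℝ 2 u {p : ℝ × ℝ | p ≠ (0, 0)})
    (hueq : ∀ p : ℝ × ℝ, p ≠ (0, 0) →
      pdx (pdx u) p + pdy (pdy u) p + a * pdx u p + b * pdy u p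
        + ((a ^ 2 + b ^ 2) / 4) * u p = 0)
    {z : ℂ} (hz : z ≠ 0) :
    fderiv ℝ (fderiv ℝ (Wf a b u)) z 1 1 + fderiv ℝ (fderiv ℝ (Wf a b u)) z I I = 0 := by
  have hev : fderiv ℝ (Wf a b u) =ᶠ[nhds z] DWf a b u := by
    filter_upwards [isOpen_punct.mem_nhds hz] with w hw
    exact (Wf_hasFDerivAt hu hw).fderiv
  rw [hev.fderiv_eq]
  have hexp := exp_lmap_hasFDerivAt a b z
  have hU2 := (Uf_fderiv_diffAt hu hz).hasFDerivAt
  have hU1 := (Uf_diffAt hu hz).hasFDerivAt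
  have hM := (hexp.smul hU2).add (hU1.smul (hexp.smul (hasFDerivAt_const (lmap a b) z)))
  have hM' : HasFDerivAt (DWf a b u)
      ((Real.exp ((lmap a b) z) • fderiv ℝ (fderiv ℝ (Uf u)) z +
          (Real.exp ((lmap a b) z) • lmap a b).smulRight (fderiv ℝ (Uf u) z)) +
        (Uf u z • (Real.exp ((lmap a b) z) • (0 : ℂ →L[ℝ] ℂ →L[ℝ] ℝ) +
            (Real.exp ((lmap a b) z) • lmap a b).smulRight (lmap a b)) +
          (fderiv ℝ (Uf u) z).smulRight (Real.exp ((lmap a b) z) • lmap a b))) z := hM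
  rw [hM'.fderiv]
  have hUeq := hueq (z.re, z.im) (mem_punct_iff.1 hz)
  rw [pdxx_dict hu hz, pdyy_dict hu hz, pdx_dict hu hz, pdy_dict hu hz] at hUeq
  have hUval : u (z.re, z.im) = Uf u z := rfl
  rw [hUval] at hUeq
  simp only [ContinuousLinearMap.add_apply, ContinuousLinearMap.coe_smul', Pi.smul_apply,
    ContinuousLinearMap.smulRight_apply, ContinuousLinearMap.zero_apply, smul_eq_mul,
    smul_zero, zero_add, lmap_one, lmap_I]
  linear_combination Real.exp ((lmap a b) z) * hUeq

noncomputable def gg (a b : ℝ) (u : ℝ × ℝ → ℝ) : ℂ → ℂ := fun z =>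
  ((fderiv ℝ (Wf a b u) z 1 : ℝ) : ℂ) - ((fderiv ℝ (Wf a b u) z I : ℝ) : ℂ) * I

lemma gg_diffAt {a b : ℝ} {u : ℝ × ℝ → ℝ}
    (hu : ContDiffOn ℝ 2 u {p : ℝ × ℝ | p ≠ (0, 0)})
    (hueq : ∀ p : ℝ × ℝ, p ≠ (0, 0) →
      pdx (pdx u) p + pdy (pdy u) p + a * pdx u p + b * pdy u p
        + ((a ^ 2 + b ^ 2) / 4) * u p = 0)
    {z : ℂ} (hz : z ≠ 0) : DifferentiableAt ℂ (gg a b u) z := by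
  have hW2 : ContDiffAt ℝ 2 (Wf a b u) z :=
    (Wf_contDiffOn hu).contDiffAt (isOpen_punct.mem_nhds hz)
  have hWd1 : DifferentiableAt ℝ (fderiv ℝ (Wf a b u)) z :=
    (hW2.fderiv_right (m := 1) (by norm_num)).differentiableAt (by norm_num)
  have hF'' : HasFDerivAt (fderiv ℝ (Wf a b u)) (fderiv ℝ (fderiv ℝ (Wf a b u)) z) z :=
    hWd1.hasFDerivAt
  have hev : ∀ᶠ w in nhds z, HasFDerivAt (Wf a b u) (fderiv ℝ (Wf a b u) w) w := by
    filter_upwards [isOpen_punct.mem_nhds hz] with w hw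
    exact (Wf_hasFDerivAt hu hw).differentiableAt.hasFDerivAt
  have hsymm := second_derivative_symmetric_of_eventually hev hF'' 1 I
  have hlap := Wf_lap hu hueq hz
  have h1 : HasFDerivAt (fun w : ℂ => ((fderiv ℝ (Wf a b u) w 1 : ℝ) : ℂ))
      ((Complex.ofRealCLM.comp (ContinuousLinearMap.apply ℝ ℝ (1 : ℂ))).comp
        (fderiv ℝ (fderiv ℝ (Wf a b u)) z)) z :=
    (Complex.ofRealCLM.comp (ContinuousLinearMap.apply ℝ ℝ (1 : ℂ))).hasFDerivAt.comp z hF''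
  have h2 : HasFDerivAt (fun w : ℂ => ((fderiv ℝ (Wf a b u) w I : ℝ) : ℂ))
      ((Complex.ofRealCLM.comp (ContinuousLinearMap.apply ℝ ℝ I)).comp
        (fderiv ℝ (fderiv ℝ (Wf a b u)) z)) z :=
    (Complex.ofRealCLM.comp (ContinuousLinearMap.apply ℝ ℝ I)).hasFDerivAt.comp z hF''
  have hg' : HasFDerivAt (gg a b u) _ z := h1.sub (h2.mul_const I)
  refine (hasDerivAt_of_CR hg' ?_).differentiableAt
  simp only [ContinuousLinearMap.sub_apply, ContinuousLinearMap.comp_apply,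
    ContinuousLinearMap.apply_apply, Complex.ofRealCLM_apply,
    ContinuousLinearMap.smul_apply, ContinuousLinearMap.mul_apply',
    ContinuousLinearMap.coe_mul]
  rw [Complex.ext_iff]
  constructor
  · simp only [smul_eq_mul, Complex.sub_re, Complex.ofReal_re, Complex.mul_re, Complex.I_re,
      Complex.I_im, Complex.ofReal_im, Complex.mul_im, Complex.sub_im]
    ring_nf
    linarith [hsymm]
  · simp only [smul_eq_mul, Complex.sub_re, Complex.ofReal_re, Complex.mul_re, Complex.I_re,
      Complex.I_im, Complex.ofReal_im, Complex.mul_im, Complex.sub_im]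
    ring_nf
    linarith [hlap]

noncomputable def Gf (a b : ℝ) (u : ℝ × ℝ → ℝ) : ℂ → ℂ := fun z =>
  gg a b u z - (starRingEnd ℂ) (gg a b u (((starRingEnd ℂ) z)⁻¹)) / z ^ 2

lemma ggbar_diffAt {a b : ℝ} {u : ℝ × ℝ → ℝ}
    (hu : ContDiffOn ℝ 2 u {p : ℝ × ℝ | p ≠ (0, 0)})
    (hueq : ∀ p : ℝ × ℝ, p ≠ (0, 0) →
      pdx (pdx u) p + pdy (pdy u) p + a * pdx u p + b * pdy u p
        + ((a ^ 2 + b ^ 2) / 4) * u p = 0)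
    {z : ℂ} (hz : z ≠ 0) :
    DifferentiableAt ℂ (fun w => (starRingEnd ℂ) (gg a b u ((starRingEnd ℂ) w))) z := by
  have hconjz : (starRingEnd ℂ) z ≠ 0 := by simpa using hz
  have hg := (gg_diffAt hu hueq hconjz).hasDerivAt
  exact (hasDerivAt_conj_conj hg).differentiableAt

lemma Gf_diffAt {a b : ℝ} {u : ℝ × ℝ → ℝ}
    (hu : ContDiffOn ℝ 2 u {p : ℝ × ℝ | p ≠ (0, 0)})
    (hueq : ∀ p : ℝ × ℝ, p ≠ (0, 0) →
      pdx (pdx u) p + pdy (pdy u) p + a * pdx u p + b * pdy u p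
        + ((a ^ 2 + b ^ 2) / 4) * u p = 0)
    {z : ℂ} (hz : z ≠ 0) : DifferentiableAt ℂ (Gf a b u) z := by
  have h1 : DifferentiableAt ℂ (fun w : ℂ =>
      (starRingEnd ℂ) (gg a b u (((starRingEnd ℂ) w)⁻¹))) z := by
    have hinv : DifferentiableAt ℂ (fun w : ℂ => w⁻¹) z := differentiableAt_inv hz
    have h2 := (ggbar_diffAt hu hueq (inv_ne_zero hz)).comp z hinv
    have heq : (fun w : ℂ => (starRingEnd ℂ) (gg a b u (((starRingEnd ℂ) w)⁻¹)))
        = (fun w : ℂ => (starRingEnd ℂ) (gg a b u ((starRingEnd ℂ) w))) ∘ (fun w : ℂ => w⁻¹) := by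
      funext w; simp [Function.comp, map_inv₀]
    rw [heq]; exact h2
  exact (gg_diffAt hu hueq hz).sub (h1.div (differentiableAt_pow 2) (pow_ne_zero 2 hz))

lemma Wf_circle {a b : ℝ} {u : ℝ × ℝ → ℝ}
    (huΓ : ∀ x y : ℝ, x ^ 2 + y ^ 2 = 1 → u (x, y) = 0)
    {z : ℂ} (hz1 : ‖z‖ = 1) : Wf a b u z = 0 := by
  have h : z.re ^ 2 + z.im ^ 2 = 1 := by
    have := Complex.sq_norm z
    rw [hz1] at this
    simp only [Complex.normSq_apply] at this
    nlinarith
  have : Uf u z = 0 := huΓ z.re z.im h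
  simp [Wf, this]

lemma circle_ne_zero {z : ℂ} (hz1 : ‖z‖ = 1) : z ≠ 0 := by
  intro h; rw [h] at hz1; simp at hz1

lemma conj_eq_inv {z : ℂ} (hz1 : ‖z‖ = 1) : (starRingEnd ℂ) z = z⁻¹ := by
  have h : (starRingEnd ℂ) z * z = 1 := by
    rw [mul_comm, Complex.mul_conj]
    norm_cast
    rw [← Complex.sq_norm, hz1]; norm_num
  exact eq_inv_of_mul_eq_one_left h

lemma zg_real {a b : ℝ} {u : ℝ × ℝ → ℝ}
    (hu : ContDiffOn ℝ 2 u {p : ℝ × ℝ | p ≠ (0, 0)})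
    (huΓ : ∀ x y : ℝ, x ^ 2 + y ^ 2 = 1 → u (x, y) = 0)
    {z : ℂ} (hz1 : ‖z‖ = 1) : (z * gg a b u z).im = 0 := by
  have hz : z ≠ 0 := circle_ne_zero hz1
  have hzexp : Complex.exp ((Complex.arg z : ℂ) * I) = z := by
    conv_rhs => rw [← Complex.norm_mul_exp_arg_mul_I z]
    rw [hz1]; simp
  -- the curve θ ↦ exp(θ i)
  have hinner : HasDerivAt (fun θ : ℝ => (θ : ℂ) * I) I (Complex.arg z) := by
    have h : HasDerivAt (fun θ : ℝ => (θ : ℂ)) 1 (Complex.arg z) := by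
      simpa using (hasDerivAt_id (Complex.arg z)).ofReal_comp
    simpa using h.mul_const I
  have houter : HasFDerivAt Complex.exp
      ((ContinuousLinearMap.smulRight (1 : ℂ →L[ℂ] ℂ)
        (Complex.exp ((Complex.arg z : ℂ) * I))).restrictScalars ℝ)
      ((Complex.arg z : ℂ) * I) :=
    (Complex.hasDerivAt_exp _).hasFDerivAt.restrictScalars ℝ
  have hcurve : HasDerivAt (fun θ : ℝ => Complex.exp ((θ : ℂ) * I)) (z * I) (Complex.arg z) := by
    have h2 := houter.comp_hasDerivAt (Complex.arg z) hinner
    simp only [Function.comp_def, ContinuousLinearMap.coe_restrictScalars',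
      ContinuousLinearMap.smulRight_apply, ContinuousLinearMap.one_apply, smul_eq_mul] at h2
    rw [hzexp] at h2
    rw [show z * I = I * z from mul_comm z I]
    exact h2
  have hWd : HasFDerivAt (Wf a b u) (fderiv ℝ (Wf a b u) z) z :=
    (Wf_hasFDerivAt hu hz).differentiableAt.hasFDerivAt
  have hWd' : HasFDerivAt (Wf a b u) (fderiv ℝ (Wf a b u) z)
      (Complex.exp ((Complex.arg z : ℂ) * I)) := by rw [hzexp]; exact hWd
  have hcomp := hWd'.comp_hasDerivAt (Complex.arg z) hcurve
  have hzero : (fun θ : ℝ => Wf a b u (Complex.exp ((θ : ℂ) * I))) = fun _ => (0 : ℝ) := by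
    funext θ
    exact Wf_circle huΓ (by simpa using Complex.norm_exp_ofReal_mul_I θ)
  simp only [Function.comp_def] at hcomp
  rw [hzero] at hcomp
  have h0 : fderiv ℝ (Wf a b u) z (z * I) = 0 := by
    have := hcomp.deriv
    simpa using this.symm
  rw [clm_apply_decomp] at h0
  have hre : (z * I).re = -z.im := by simp
  have him : (z * I).im = z.re := by simp
  rw [hre, him] at h0
  simp only [gg, Complex.mul_im, Complex.sub_re, Complex.sub_im, Complex.ofReal_re,
    Complex.ofReal_im, Complex.mul_re, Complex.I_re, Complex.I_im]
  ring_nf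
  ring_nf at h0
  linarith

lemma Gf_circle {a b : ℝ} {u : ℝ × ℝ → ℝ}
    (hu : ContDiffOn ℝ 2 u {p : ℝ × ℝ | p ≠ (0, 0)})
    (huΓ : ∀ x y : ℝ, x ^ 2 + y ^ 2 = 1 → u (x, y) = 0)
    {z : ℂ} (hz1 : ‖z‖ = 1) : Gf a b u z = 0 := by
  have hz : z ≠ 0 := circle_ne_zero hz1
  have hι : ((starRingEnd ℂ) z)⁻¹ = z := by rw [conj_eq_inv hz1, inv_inv]
  have hreal : (starRingEnd ℂ) (z * gg a b u z) = z * gg a b u z :=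
    Complex.conj_eq_iff_im.2 (zg_real hu huΓ hz1)
  have hconj : (starRingEnd ℂ) (gg a b u z) = z ^ 2 * gg a b u z := by
    rw [map_mul, conj_eq_inv hz1] at hreal
    field_simp at hreal
    linear_combination hreal
  rw [Gf, hι, hconj]
  field_simp
  ring

lemma punct_preconnected : IsPreconnected {z : ℂ | z ≠ 0} := by
  have h : IsConnected ({(0 : ℂ)}ᶜ) := by
    apply isConnected_compl_singleton_of_one_lt_rank
    rw [Complex.rank_real_complex]
    norm_num
  have heq : {z : ℂ | z ≠ 0} = {(0 : ℂ)}ᶜ := by ext z; simp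
  rw [heq]
  exact h.isPreconnected

lemma freq_circle {f : ℂ → ℂ} (hf : ∀ z : ℂ, ‖z‖ = 1 → f z = 0) :
    ∃ᶠ z in nhdsWithin 1 {(1 : ℂ)}ᶜ, f z = 0 := by
  have hseq : Filter.Tendsto (fun n : ℕ => Complex.exp (((1 / (n + 1) : ℝ) : ℂ) * I)) Filter.atTop
      (nhdsWithin 1 {(1 : ℂ)}ᶜ) := by
    rw [tendsto_nhdsWithin_iff]
    constructor
    · have h1 : Filter.Tendsto (fun n : ℕ => (1 / (n + 1) : ℝ)) Filter.atTop (nhds 0) :=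
        tendsto_one_div_add_atTop_nhds_zero_nat
      have hcont : Continuous (fun t : ℝ => Complex.exp ((t : ℂ) * I)) := by continuity
      have h2 := (hcont.tendsto 0).comp h1
      simpa [Function.comp_def] using h2
    · refine Filter.Eventually.of_forall (fun n => ?_)
      simp only [Set.mem_compl_iff, Set.mem_singleton_iff]
      intro h
      have him := congrArg Complex.im h
      rw [Complex.exp_ofReal_mul_I_im] at him
      simp only [Complex.one_im] at him
      have hpos : (0 : ℝ) < 1 / (n + 1) := by positivity
      have hlt : (1 / (n + 1) : ℝ) < Real.pi := by
        have h1 : (1 / (n + 1) : ℝ) ≤ 1 := by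
          rw [div_le_one (by positivity)]; linarith [Nat.cast_nonneg (α := ℝ) n]
        linarith [Real.pi_gt_three]
      have := Real.sin_pos_of_pos_of_lt_pi hpos hlt
      rw [him] at this
      exact lt_irrefl 0 this
  exact hseq.frequently (Filter.Eventually.of_forall
    (fun n => hf _ (Complex.norm_exp_ofReal_mul_I _))).frequently

lemma analytic_zero_on_punct {f : ℂ → ℂ} (hf : ∀ z : ℂ, z ≠ 0 → DifferentiableAt ℂ f z)
    (hcirc : ∀ z : ℂ, ‖z‖ = 1 → f z = 0) : ∀ z : ℂ, z ≠ 0 → f z = 0 := by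
  have hdo : DifferentiableOn ℂ f {z : ℂ | z ≠ 0} :=
    fun z hz => (hf z hz).differentiableWithinAt
  have han : AnalyticOnNhd ℂ f {z : ℂ | z ≠ 0} := hdo.analyticOnNhd isOpen_punct
  have h1 : (1 : ℂ) ∈ {z : ℂ | z ≠ 0} := by simp
  have := han.eqOn_zero_of_preconnected_of_frequently_eq_zero punct_preconnected h1
    (freq_circle hcirc)
  intro z hz
  exact this hz

noncomputable def phi (a b : ℝ) (u : ℝ × ℝ → ℝ) : ℂ → ℂ := fun z =>
  ((Wf a b u z : ℝ) : ℂ) + ((Wf a b u (((starRingEnd ℂ) z)⁻¹) : ℝ) : ℂ)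

set_option synthInstance.maxHeartbeats 1000000 in
lemma phi_diffAt {a b : ℝ} {u : ℝ × ℝ → ℝ}
    (hu : ContDiffOn ℝ 2 u {p : ℝ × ℝ | p ≠ (0, 0)})
    (hG : ∀ z : ℂ, z ≠ 0 → Gf a b u z = 0)
    {z : ℂ} (hz : z ≠ 0) : DifferentiableAt ℂ (phi a b u) z := by
  have hcz : (starRingEnd ℂ) z ≠ 0 := by simpa using hz
  have hιz : ((starRingEnd ℂ) z)⁻¹ ≠ 0 := inv_ne_zero hcz
  set μ : ℂ := -(((starRingEnd ℂ) z) ^ 2)⁻¹ with hμ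
  have hconj : HasFDerivAt (fun w : ℂ => (starRingEnd ℂ) w)
      (Complex.conjCLE : ℂ ≃L[ℝ] ℂ).toContinuousLinearMap z :=
    Complex.conjCLE.hasFDerivAt
  have hinv : HasDerivAt (fun w : ℂ => w⁻¹) μ ((starRingEnd ℂ) z) := hasDerivAt_inv hcz
  have hι : HasFDerivAt (fun w : ℂ => ((starRingEnd ℂ) w)⁻¹)
      (((ContinuousLinearMap.smulRight (1 : ℂ →L[ℂ] ℂ) μ).restrictScalars ℝ).comp
        (Complex.conjCLE : ℂ ≃L[ℝ] ℂ).toContinuousLinearMap) z := by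
    have h2 := (hinv.hasFDerivAt.restrictScalars ℝ).comp z hconj
    simpa [Function.comp_def, ContinuousLinearMap.smulRight_one_eq_toSpanSingleton] using h2
  have hW0 : HasFDerivAt (Wf a b u) (fderiv ℝ (Wf a b u) z) z :=
    (Wf_hasFDerivAt hu hz).differentiableAt.hasFDerivAt
  have hW1 : HasFDerivAt (Wf a b u) (fderiv ℝ (Wf a b u) (((starRingEnd ℂ) z)⁻¹))
      (((starRingEnd ℂ) z)⁻¹) :=
    (Wf_hasFDerivAt hu hιz).differentiableAt.hasFDerivAt
  have hWι : HasFDerivAt (fun w : ℂ => Wf a b u (((starRingEnd ℂ) w)⁻¹))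
      ((fderiv ℝ (Wf a b u) (((starRingEnd ℂ) z)⁻¹)).comp
        (((ContinuousLinearMap.smulRight (1 : ℂ →L[ℂ] ℂ) μ).restrictScalars ℝ).comp
          (Complex.conjCLE : ℂ ≃L[ℝ] ℂ).toContinuousLinearMap)) z := by
    have h2 := hW1.comp z hι
    simpa [Function.comp_def] using h2
  have hψ := hW0.add hWι
  set T0 := fderiv ℝ (Wf a b u) z with hT0
  set T1 := fderiv ℝ (Wf a b u) (((starRingEnd ℂ) z)⁻¹) with hT1
  set L := T0 + T1.comp
      (((ContinuousLinearMap.smulRight (1 : ℂ →L[ℂ] ℂ) μ).restrictScalars ℝ).comp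
        (Complex.conjCLE : ℂ ≃L[ℝ] ℂ).toContinuousLinearMap) with hL
  have hL1 : L 1 = T0 1 + T1 μ := by
    simp [hL, ContinuousLinearMap.comp_apply, Complex.conjCLE_apply]
  have hLI : L I = T0 I + T1 (-(I * μ)) := by
    have : ((starRingEnd ℂ) I) • μ = -(I * μ) := by
      simp [Complex.conj_I]
    simp [hL, ContinuousLinearMap.comp_apply, Complex.conjCLE_apply, this]
  have hGz := hG z hz
  have hcombo : ((L 1 : ℝ) : ℂ) - ((L I : ℝ) : ℂ) * I = 0 := by
    rw [hL1, hLI]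
    push_cast
    have hkey := key_combo T1 μ
    have hgg0 : ((T0 1 : ℝ) : ℂ) - ((T0 I : ℝ) : ℂ) * I = gg a b u z := rfl
    have hgg1 : ((T1 1 : ℝ) : ℂ) - ((T1 I : ℝ) : ℂ) * I = gg a b u (((starRingEnd ℂ) z)⁻¹) := rfl
    have hconjμ : (starRingEnd ℂ) μ = -((z ^ 2)⁻¹) := by
      rw [hμ]
      simp [map_inv₀, map_pow]
    calc (((T0 1 : ℝ) : ℂ) + ((T1 μ : ℝ) : ℂ)) - (((T0 I : ℝ) : ℂ) + ((T1 (-(I * μ)) : ℝ) : ℂ)) * I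
        = (((T0 1 : ℝ) : ℂ) - ((T0 I : ℝ) : ℂ) * I)
          + ((((T1 μ : ℝ) : ℂ)) - (((T1 (-(I * μ)) : ℝ) : ℂ)) * I) := by ring
      _ = gg a b u z + (starRingEnd ℂ) (gg a b u (((starRingEnd ℂ) z)⁻¹)) * (starRingEnd ℂ) μ := by
          rw [hkey, hgg0, hgg1]
      _ = gg a b u z - (starRingEnd ℂ) (gg a b u (((starRingEnd ℂ) z)⁻¹)) / z ^ 2 := by
          rw [hconjμ]
          field_simp
          ring
      _ = Gf a b u z := rfl
      _ = 0 := hGz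
  have hL1z : L 1 = 0 := by
    have hre := congrArg Complex.re hcombo
    simpa using hre
  have hLIz : L I = 0 := by
    have him := congrArg Complex.im hcombo
    simpa using him
  have hLzero : L = 0 := by
    apply ContinuousLinearMap.ext
    intro w
    rw [clm_apply_decomp L w, hL1z, hLIz]
    simp
  rw [hLzero] at hψ
  have hφ : HasFDerivAt (phi a b u) (Complex.ofRealCLM.comp (0 : ℂ →L[ℝ] ℝ)) z := by
    have h2 := Complex.ofRealCLM.hasFDerivAt.comp z hψ
    unfold phi
    simpa [Function.comp_def, phi] using h2
  rw [ContinuousLinearMap.comp_zero] at hφ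
  have hCR : (0 : ℂ →L[ℝ] ℂ) I = I * (0 : ℂ →L[ℝ] ℂ) 1 := by simp
  exact (hasDerivAt_of_CR hφ hCR).differentiableAt

lemma phi_circle {a b : ℝ} {u : ℝ × ℝ → ℝ}
    (huΓ : ∀ x y : ℝ, x ^ 2 + y ^ 2 = 1 → u (x, y) = 0)
    {z : ℂ} (hz1 : ‖z‖ = 1) : phi a b u z = 0 := by
  have hι : ((starRingEnd ℂ) z)⁻¹ = z := by rw [conj_eq_inv hz1, inv_inv]
  simp [phi, hι, Wf_circle huΓ hz1]

/-- The paper's example of Theorem 5.3 for the unit circle: point-to-point reflection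
under inversion for solutions of `Δu + a uₓ + b u_y + ((a²+b²)/4) u = 0` vanishing
on the unit circle. -/
theorem reflection_across_unit_circle
    (a b : ℝ)
    (u : ℝ × ℝ → ℝ) (hu : ContDiffOn ℝ 2 u {p : ℝ × ℝ | p ≠ (0, 0)})
    (hueq : ∀ p : ℝ × ℝ, p ≠ (0, 0) →
      pdx (pdx u) p + pdy (pdy u) p + a * pdx u p + b * pdy u p
        + ((a ^ 2 + b ^ 2) / 4) * u p = 0)
    (huΓ : ∀ x y : ℝ, x ^ 2 + y ^ 2 = 1 → u (x, y) = 0) :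
    ∀ x₀ y₀ : ℝ, (x₀, y₀) ≠ ((0 : ℝ), (0 : ℝ)) →
      u (x₀, y₀) =
        -Real.exp ((a * x₀ + b * y₀) * (1 - x₀ ^ 2 - y₀ ^ 2) / (2 * (x₀ ^ 2 + y₀ ^ 2))) *
          u (x₀ / (x₀ ^ 2 + y₀ ^ 2), y₀ / (x₀ ^ 2 + y₀ ^ 2)) := by
  intro x₀ y₀ hp
  have hG : ∀ z : ℂ, z ≠ 0 → Gf a b u z = 0 :=
    analytic_zero_on_punct (fun z hz => Gf_diffAt hu hueq hz)
      (fun z hz1 => Gf_circle hu huΓ hz1)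
  have hphi : ∀ z : ℂ, z ≠ 0 → phi a b u z = 0 :=
    analytic_zero_on_punct (fun z hz => phi_diffAt hu hG hz)
      (fun z hz1 => phi_circle huΓ hz1)
  have hxy : ¬(x₀ = 0 ∧ y₀ = 0) := by simpa [Prod.ext_iff] using hp
  have hr2pos : 0 < x₀ ^ 2 + y₀ ^ 2 := by
    rcases not_and_or.1 hxy with h | h
    · have h2 : 0 < x₀ ^ 2 := by positivity
      nlinarith [sq_nonneg y₀]
    · have h2 : 0 < y₀ ^ 2 := by positivity
      nlinarith [sq_nonneg x₀]
  have hr2ne : x₀ ^ 2 + y₀ ^ 2 ≠ 0 := ne_of_gt hr2pos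
  have hz₀ : ((x₀ : ℂ) + (y₀ : ℂ) * I) ≠ 0 := by
    rw [mem_punct_iff]
    simpa using hp
  have h0 := hphi _ hz₀
  rw [phi] at h0
  have hreal : Wf a b u ((x₀ : ℂ) + (y₀ : ℂ) * I)
      + Wf a b u (((starRingEnd ℂ) ((x₀ : ℂ) + (y₀ : ℂ) * I))⁻¹) = 0 := by
    have h2 := congrArg Complex.re h0
    simpa using h2
  -- coordinates of the reflected point
  set w : ℂ := ((starRingEnd ℂ) ((x₀ : ℂ) + (y₀ : ℂ) * I))⁻¹ with hw
  have hwre : w.re = x₀ / (x₀ ^ 2 + y₀ ^ 2) := by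
    rw [hw]
    simp [Complex.inv_re, Complex.normSq_apply]
    ring_nf
  have hwim : w.im = y₀ / (x₀ ^ 2 + y₀ ^ 2) := by
    rw [hw]
    simp [Complex.inv_im, Complex.normSq_apply]
    ring_nf
  have hW0 : Wf a b u ((x₀ : ℂ) + (y₀ : ℂ) * I)
      = Real.exp (a / 2 * x₀ + b / 2 * y₀) * u (x₀, y₀) := by
    show Real.exp (lmap a b _) * u (_, _) = _
    rw [lmap_apply]
    simp
  have hW1 : Wf a b u w
      = Real.exp (a / 2 * (x₀ / (x₀ ^ 2 + y₀ ^ 2)) + b / 2 * (y₀ / (x₀ ^ 2 + y₀ ^ 2)))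
        * u (x₀ / (x₀ ^ 2 + y₀ ^ 2), y₀ / (x₀ ^ 2 + y₀ ^ 2)) := by
    show Real.exp (lmap a b w) * u (w.re, w.im) = _
    rw [lmap_apply, hwre, hwim]
  rw [hW0, hW1] at hreal
  have hkey : Real.exp (a / 2 * (x₀ / (x₀ ^ 2 + y₀ ^ 2)) + b / 2 * (y₀ / (x₀ ^ 2 + y₀ ^ 2)))
      = Real.exp (a / 2 * x₀ + b / 2 * y₀)
        * Real.exp ((a * x₀ + b * y₀) * (1 - x₀ ^ 2 - y₀ ^ 2) / (2 * (x₀ ^ 2 + y₀ ^ 2))) := by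
    rw [← Real.exp_add]
    congr 1
    field_simp
    ring
  rw [hkey] at hreal
  have hEne : Real.exp (a / 2 * x₀ + b / 2 * y₀) ≠ 0 := Real.exp_ne_zero _
  apply mul_left_cancel₀ hEne
  linear_combination hreal
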